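/- For the family of profiles φ̂_{x₀}(x) = π/2 − 2 arctan(e^{−x+x₀}) and the weight a = 2 on (−1,1), a = 1 elsewhere, the energy satisfies G(φ̂_{x₀}) = 4 + 2(sin φ̂_{x₀}(1) − sin φ̂_{x₀}(−1)), and this quantity tends to 4 as x₀ → +∞ while being strictly greater than 4 for every x₀ ∈ ℝ. -/

import Mathlib

open Real MeasureTheory Filter Set Topology


lemma aux_cos (u : ℝ) : Real.cos (π / 2 - 2 * Real.arctan u) = 2 * u / (1 + u ^ 2) := by
  have hs : Real.sqrt (1 + u ^ 2) ^ 2 = 1 + u ^ 2 := Real.sq_sqrt (by positivity)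
  have hsne : Real.sqrt (1 + u ^ 2) ≠ 0 := by positivity
  rw [Real.cos_pi_div_two_sub, Real.sin_two_mul, Real.sin_arctan, Real.cos_arctan]
  field_simp
  rw [hs]

lemma aux_sin (u : ℝ) : Real.sin (π / 2 - 2 * Real.arctan u) = (1 - u ^ 2) / (1 + u ^ 2) := by
  have h : (1 : ℝ) + u ^ 2 ≠ 0 := by positivity
  rw [Real.sin_pi_div_two_sub, Real.cos_two_mul, Real.cos_sq_arctan]
  field_simp
  ring

lemma aux_deriv (x₀ x : ℝ) :
    HasDerivAt (fun y => π / 2 - 2 * Real.arctan (Real.exp (-y + x₀)))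
      (2 * Real.exp (-x + x₀) / (1 + Real.exp (-x + x₀) ^ 2)) x := by
  have h1 : HasDerivAt (fun y : ℝ => -y + x₀) (-1) x := by
    simpa using ((hasDerivAt_id x).neg.add_const x₀)
  have h2 : HasDerivAt (fun y : ℝ => Real.exp (-y + x₀)) (Real.exp (-x + x₀) * -1) x := h1.exp
  have h3 := h2.arctan
  have h4 := (h3.const_mul (2:ℝ)).const_sub (π / 2)
  refine h4.congr_deriv ?_
  have h : (1 : ℝ) + Real.exp (-x + x₀) ^ 2 ≠ 0 := by positivity
  ring

section main
variable (x₀ : ℝ)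

noncomputable def Ff (x : ℝ) : ℝ := Real.sin (π / 2 - 2 * Real.arctan (Real.exp (-x + x₀)))

noncomputable def gg (x : ℝ) : ℝ := (2 * Real.exp (-x + x₀) / (1 + Real.exp (-x + x₀) ^ 2)) ^ 2

lemma hFderiv (x : ℝ) : HasDerivAt (Ff x₀) (gg x₀ x) x := by
  have h := (aux_deriv x₀ x).sin
  have hc := aux_cos (Real.exp (-x + x₀))
  unfold Ff gg
  convert h using 1
  rw [hc]; ring

lemma gg_cont : Continuous (gg x₀) := by
  apply Continuous.pow
  apply Continuous.div (by fun_prop) (by fun_prop)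
  intro x; positivity

lemma Ff_top : Tendsto (Ff x₀) atTop (𝓝 1) := by
  have h1 : Tendsto (fun x : ℝ => -x + x₀) atTop atBot :=
    tendsto_atBot_add_const_right _ x₀ tendsto_neg_atTop_atBot
  have h2 : Tendsto (fun x : ℝ => Real.exp (-x + x₀)) atTop (𝓝 0) :=
    Real.tendsto_exp_atBot.comp h1
  have h3 : Continuous (fun u : ℝ => Real.sin (π / 2 - 2 * Real.arctan u)) :=
    Real.continuous_sin.comp (continuous_const.sub (continuous_const.mul Real.continuous_arctan))
  have := (h3.tendsto 0).comp h2
  unfold Ff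
  simpa [Ff, Function.comp_def] using this

lemma Ff_bot : Tendsto (Ff x₀) atBot (𝓝 (-1)) := by
  have h1 : Tendsto (fun x : ℝ => -x + x₀) atBot atTop :=
    tendsto_atTop_add_const_right _ x₀ tendsto_neg_atBot_atTop
  have h2 : Tendsto (fun x : ℝ => Real.exp (-x + x₀)) atBot atTop :=
    Real.tendsto_exp_atTop.comp h1
  have h2' : Tendsto (fun x : ℝ => Real.arctan (Real.exp (-x + x₀))) atBot (𝓝 (π / 2)) :=
    (Real.tendsto_arctan_atTop.mono_right nhdsWithin_le_nhds).comp h2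
  have h3 : Continuous (fun u : ℝ => Real.sin (π / 2 - 2 * u)) := by fun_prop
  have := (h3.tendsto (π / 2)).comp h2'
  simp only [Function.comp_def] at this
  unfold Ff
  convert this using 2
  rw [show π / 2 - 2 * (π / 2) = -(π/2) by ring, Real.sin_neg, Real.sin_pi_div_two]

lemma gg_int : Integrable (gg x₀) := by
  have hIoi : IntegrableOn (gg x₀) (Ioi 0) :=
    integrableOn_Ioi_deriv_of_nonneg' (fun x _ => hFderiv x₀ x) (fun x _ => sq_nonneg _)
      (Ff_top x₀)
  have hIic : IntegrableOn (gg x₀) (Iic 0) := by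
    apply integrableOn_Iic_of_intervalIntegral_norm_bounded (f := gg x₀) (a := fun i : ℝ => i)
      (l := atBot) 2 0 (fun i => ((gg_cont x₀).integrableOn_Ioc)) tendsto_id
    filter_upwards [eventually_le_atBot (0:ℝ)] with i hi
    have heq : (∫ x in i..0, ‖gg x₀ x‖) = ∫ x in i..0, gg x₀ x := by
      apply intervalIntegral.integral_congr
      intro x _; exact norm_of_nonneg (sq_nonneg _)
    rw [heq, intervalIntegral.integral_eq_sub_of_hasDerivAt (fun x _ => hFderiv x₀ x)
      (((gg_cont x₀).intervalIntegrable) i 0)]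
    have h1 : Ff x₀ 0 ≤ 1 := Real.sin_le_one _
    have h2 : -1 ≤ Ff x₀ i := Real.neg_one_le_sin _
    simp only [Ff] at *
    linarith
  have := hIic.union hIoi
  rw [Iic_union_Ioi] at this
  exact integrableOn_univ.mp this

lemma gg_integral : ∫ x, gg x₀ x = 2 := by
  rw [integral_of_hasDerivAt_of_tendsto (fun x => hFderiv x₀ x) (gg_int x₀) (Ff_bot x₀)
    (Ff_top x₀)]
  norm_num

lemma gg_integral_Ioo : ∫ x in Ioo (-1:ℝ) 1, gg x₀ x = Ff x₀ 1 - Ff x₀ (-1) := by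
  rw [← integral_Ioc_eq_integral_Ioo, ← intervalIntegral.integral_of_le (by norm_num : (-1:ℝ) ≤ 1)]
  exact intervalIntegral.integral_eq_sub_of_hasDerivAt (fun x _ => hFderiv x₀ x)
    (((gg_cont x₀).intervalIntegrable) _ _)

end main


/-- For the profiles `φ̂_{x₀}(x) = π/2 − 2 arctan(e^{−x+x₀})` and the step weight
`a = 2` on `(−1,1)`, `a = 1` elsewhere:
`G(φ̂_{x₀}) = 4 + 2(sin φ̂_{x₀}(1) − sin φ̂_{x₀}(−1))`, this is `> 4` for every `x₀`,
and it tends to `4` as `x₀ → +∞`. -/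
theorem statement7 :
    (∀ x₀ : ℝ,
      (∫ x, ((if x ∈ Set.Ioo (-1 : ℝ) 1 then (2 : ℝ) else 1) *
            (deriv (fun y => π / 2 - 2 * Real.arctan (Real.exp (-y + x₀))) x) ^ 2
          + (if x ∈ Set.Ioo (-1 : ℝ) 1 then (2 : ℝ) else 1) *
            Real.cos (π / 2 - 2 * Real.arctan (Real.exp (-x + x₀))) ^ 2))
        = 4 + 2 * (Real.sin (π / 2 - 2 * Real.arctan (Real.exp (-1 + x₀)))
            - Real.sin (π / 2 - 2 * Real.arctan (Real.exp (1 + x₀)))) ∧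
      (4 : ℝ) < 4 + 2 * (Real.sin (π / 2 - 2 * Real.arctan (Real.exp (-1 + x₀)))
            - Real.sin (π / 2 - 2 * Real.arctan (Real.exp (1 + x₀))))) ∧
    Tendsto (fun x₀ : ℝ =>
        4 + 2 * (Real.sin (π / 2 - 2 * Real.arctan (Real.exp (-1 + x₀)))
          - Real.sin (π / 2 - 2 * Real.arctan (Real.exp (1 + x₀)))))
      atTop (nhds 4) := by
  constructor
  · intro x₀
    constructor
    · have hde : ∀ x : ℝ, deriv (fun y => π / 2 - 2 * Real.arctan (Real.exp (-y + x₀))) x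
          = 2 * Real.exp (-x + x₀) / (1 + Real.exp (-x + x₀) ^ 2) :=
        fun x => (aux_deriv x₀ x).deriv
      have hint_eq : (fun x : ℝ => ((if x ∈ Set.Ioo (-1 : ℝ) 1 then (2 : ℝ) else 1) *
            (deriv (fun y => π / 2 - 2 * Real.arctan (Real.exp (-y + x₀))) x) ^ 2
          + (if x ∈ Set.Ioo (-1 : ℝ) 1 then (2 : ℝ) else 1) *
            Real.cos (π / 2 - 2 * Real.arctan (Real.exp (-x + x₀))) ^ 2))
          = fun x => 2 * gg x₀ x + (Set.Ioo (-1:ℝ) 1).indicator (fun x => 2 * gg x₀ x) x := by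
        funext x
        rw [hde x, aux_cos]
        by_cases hx : x ∈ Set.Ioo (-1:ℝ) 1 <;> simp [hx, gg] <;> ring
      rw [hint_eq, integral_add ((gg_int x₀).const_mul 2)
        (((gg_int x₀).const_mul 2).indicator measurableSet_Ioo),
        integral_indicator measurableSet_Ioo, integral_const_mul, integral_const_mul,
        gg_integral, gg_integral_Ioo]
      have h1 : Ff x₀ 1 = Real.sin (π / 2 - 2 * Real.arctan (Real.exp (-1 + x₀))) := by
        norm_num [Ff]
      have h2 : Ff x₀ (-1) = Real.sin (π / 2 - 2 * Real.arctan (Real.exp (1 + x₀))) := by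
        norm_num [Ff]
      rw [h1, h2]; ring
    · have harc1 : Real.arctan (Real.exp (-1 + x₀)) < Real.arctan (Real.exp (1 + x₀)) :=
        Real.arctan_strictMono (Real.exp_lt_exp.mpr (by linarith))
      have hmem : ∀ u : ℝ, 0 < u → π / 2 - 2 * Real.arctan u ∈ Set.Icc (-(π/2)) (π/2) := by
        intro u hu
        constructor
        · have := Real.arctan_lt_pi_div_two u; linarith
        · have : 0 < Real.arctan u := by rw [← Real.arctan_zero]; exact Real.arctan_strictMono hu
          linarith
      have hlt : Real.sin (π / 2 - 2 * Real.arctan (Real.exp (1 + x₀)))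
          < Real.sin (π / 2 - 2 * Real.arctan (Real.exp (-1 + x₀))) :=
        Real.strictMonoOn_sin (hmem _ (Real.exp_pos _)) (hmem _ (Real.exp_pos _))
          (by linarith)
      linarith
  · have key : ∀ c : ℝ, Tendsto (fun x₀ : ℝ =>
        Real.sin (π / 2 - 2 * Real.arctan (Real.exp (c + x₀)))) atTop (𝓝 (-1)) := by
      intro c
      have h1 : Tendsto (fun x₀ : ℝ => c + x₀) atTop atTop :=
        tendsto_atTop_add_const_left _ c tendsto_id
      have h2 : Tendsto (fun x₀ : ℝ => Real.exp (c + x₀)) atTop atTop :=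
        Real.tendsto_exp_atTop.comp h1
      have h3 : Tendsto (fun x₀ : ℝ => Real.arctan (Real.exp (c + x₀))) atTop (𝓝 (π / 2)) :=
        (Real.tendsto_arctan_atTop.mono_right nhdsWithin_le_nhds).comp h2
      have h4 : Continuous (fun u : ℝ => Real.sin (π / 2 - 2 * u)) := by fun_prop
      have := (h4.tendsto (π / 2)).comp h3
      simp only [Function.comp_def] at this
      convert this using 2
      rw [show π / 2 - 2 * (π / 2) = -(π/2) by ring, Real.sin_neg, Real.sin_pi_div_two]
    have := ((key (-1)).sub (key 1)).const_mul 2 |>.const_add 4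
    simpa using this
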